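/- Let ν be a σ-finite measure on ℝ^{I+1} with ν({0})=0, such that z⁰e^{u⁰z⁰+uⁱzⁱ} is ν-integrable for all u⁰,uⁱ∈ℝ, and assume ν({z : z⁰>0}) > 0 and ν({z : z⁰<0}) > 0. Then for each fixed uⁱ, the function φ(u⁰) = ∫ z⁰ e^{u⁰z⁰+uⁱzⁱ} dν(z) is strictly increasing in u⁰ and is surjective onto ℝ; hence it admits a continuous inverse defined on all of ℝ. -/

import Mathlib

open MeasureTheory Real Filter Function

/-- Auxiliary: under the integrability assumption and positivity of ν on {z⁰>0},
the function u⁰ ↦ ∫ z⁰ e^{u⁰z⁰+uⁱzⁱ} dν is unbounded above. -/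
lemma aux_unbdd (I : ℕ) (ν : Measure (Fin (I + 1) → ℝ)) [SigmaFinite ν] (i : Fin (I + 1))
    (hInt : ∀ u0 ui : ℝ, Integrable (fun z => z 0 * Real.exp (u0 * z 0 + ui * z i)) ν)
    (hpos : 0 < ν {z | 0 < z 0}) (ui M : ℝ) :
    ∃ u0 : ℝ, M ≤ ∫ z, z 0 * Real.exp (u0 * z 0 + ui * z i) ∂ν := by
  classical
  set S : ℕ → Set (Fin (I + 1) → ℝ) :=
    fun n => {z | ((n : ℝ) + 1)⁻¹ ≤ z 0 ∧ |z i| ≤ (n : ℝ)} with hS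
  have hSmeas : ∀ n, MeasurableSet (S n) := by
    intro n
    exact (measurableSet_le measurable_const (measurable_pi_apply 0)).inter
      (measurableSet_le (measurable_pi_apply i).abs measurable_const)
  -- some S n has positive measure
  have hsub : {z | 0 < z 0} ⊆ ⋃ n, S n := by
    intro z hz
    have hz0 : (0 : ℝ) < z 0 := hz
    refine Set.mem_iUnion.2 ⟨⌈(z 0)⁻¹⌉₊ + ⌈|z i|⌉₊, ?_, ?_⟩
    · have h1 : (z 0)⁻¹ ≤ (⌈(z 0)⁻¹⌉₊ : ℝ) := Nat.le_ceil _
      have h2 : (z 0)⁻¹ ≤ ((⌈(z 0)⁻¹⌉₊ + ⌈|z i|⌉₊ : ℕ) : ℝ) + 1 := by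
        push_cast; linarith [(by positivity : (0 : ℝ) ≤ (⌈|z i|⌉₊ : ℝ))]
      have hinvpos : (0 : ℝ) < (z 0)⁻¹ := by positivity
      calc (((⌈(z 0)⁻¹⌉₊ + ⌈|z i|⌉₊ : ℕ) : ℝ) + 1)⁻¹ ≤ ((z 0)⁻¹)⁻¹ :=
            inv_anti₀ hinvpos h2
        _ = z 0 := inv_inv _
    · have h1 : |z i| ≤ (⌈|z i|⌉₊ : ℝ) := Nat.le_ceil _
      push_cast
      linarith [(by positivity : (0 : ℝ) ≤ (⌈(z 0)⁻¹⌉₊ : ℝ))]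
  have hex : ∃ n, 0 < ν (S n) := by
    by_contra h
    push_neg at h
    have : ν (⋃ n, S n) = 0 := by
      refine measure_iUnion_null fun n => le_antisymm (h n) zero_le
    exact absurd (le_antisymm ((measure_mono hsub).trans this.le) zero_le)
      (ne_of_gt hpos)
  obtain ⟨n, hn⟩ := hex
  set ε : ℝ := ((n : ℝ) + 1)⁻¹ * Real.exp (-(|ui| * n)) with hε
  have hεpos : 0 < ε := by positivity
  -- pointwise lower bound on S n
  have hlow : ∀ u : ℝ, 0 ≤ u → ∀ z ∈ S n,
      ε * Real.exp (u * ((n : ℝ) + 1)⁻¹) ≤ z 0 * Real.exp (u * z 0 + ui * z i) := by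
    intro u hu z hz
    obtain ⟨hz0, hzi⟩ := hz
    have hz0pos : (0 : ℝ) < z 0 := lt_of_lt_of_le (by positivity) hz0
    have h1 : Real.exp (u * ((n : ℝ) + 1)⁻¹) ≤ Real.exp (u * z 0) :=
      Real.exp_le_exp.2 (mul_le_mul_of_nonneg_left hz0 hu)
    have h2 : Real.exp (-(|ui| * n)) ≤ Real.exp (ui * z i) := by
      refine Real.exp_le_exp.2 ?_
      have : |ui * z i| ≤ |ui| * n := by
        rw [abs_mul]
        exact mul_le_mul_of_nonneg_left hzi (abs_nonneg _)
      linarith [neg_abs_le (ui * z i)]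
    calc ε * Real.exp (u * ((n : ℝ) + 1)⁻¹)
        = ((n : ℝ) + 1)⁻¹ * (Real.exp (u * ((n : ℝ) + 1)⁻¹) * Real.exp (-(|ui| * n))) := by
          rw [hε]; ring
      _ ≤ z 0 * (Real.exp (u * z 0) * Real.exp (ui * z i)) := by
          refine mul_le_mul hz0 (mul_le_mul h1 h2 (Real.exp_pos _).le (Real.exp_pos _).le)
            (by positivity) hz0pos.le
      _ = z 0 * Real.exp (u * z 0 + ui * z i) := by rw [Real.exp_add]
  -- S n has finite measure
  have hfin : ν (S n) < ⊤ := by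
    have hsub2 : S n ⊆ {z | ε ≤ z 0 * Real.exp (0 * z 0 + ui * z i)} := by
      intro z hz
      have := hlow 0 le_rfl z hz
      simpa using this
    exact lt_of_le_of_lt (measure_mono hsub2) ((hInt 0 ui).measure_ge_lt_top hεpos)
  set m : ℝ := (ν (S n)).toReal with hm
  have hmpos : 0 < m := ENNReal.toReal_pos (ne_of_gt hn) (ne_of_lt hfin)
  -- constant C bounding the contribution outside S n from below
  set C : ℝ := ∫ z, |z 0 * Real.exp (0 * z 0 + ui * z i)| ∂ν with hC
  have hCint : Integrable (fun z => |z 0 * Real.exp (0 * z 0 + ui * z i)|) ν := (hInt 0 ui).abs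
  -- key lower bound for u ≥ 0
  have hkey : ∀ u : ℝ, 0 ≤ u →
      ε * Real.exp (u * ((n : ℝ) + 1)⁻¹) * m - C ≤
        ∫ z, z 0 * Real.exp (u * z 0 + ui * z i) ∂ν := by
    intro u hu
    have hIu := hInt u ui
    have hsplit : (∫ z in S n, z 0 * Real.exp (u * z 0 + ui * z i) ∂ν) +
        (∫ z in (S n)ᶜ, z 0 * Real.exp (u * z 0 + ui * z i) ∂ν) =
        ∫ z, z 0 * Real.exp (u * z 0 + ui * z i) ∂ν :=
      integral_add_compl (hSmeas n) hIu
    have hb1 : ε * Real.exp (u * ((n : ℝ) + 1)⁻¹) * m ≤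
        ∫ z in S n, z 0 * Real.exp (u * z 0 + ui * z i) ∂ν := by
      have := setIntegral_mono_on
        (integrableOn_const hfin.ne enorm_ne_top) hIu.integrableOn (hSmeas n) (hlow u hu)
      rwa [setIntegral_const, smul_eq_mul, mul_comm] at this
    have hb2 : -C ≤ ∫ z in (S n)ᶜ, z 0 * Real.exp (u * z 0 + ui * z i) ∂ν := by
      have hptw : ∀ z : Fin (I + 1) → ℝ, -(|z 0 * Real.exp (0 * z 0 + ui * z i)|) ≤
          z 0 * Real.exp (u * z 0 + ui * z i) := by
        intro z
        rcases le_or_gt 0 (z 0) with h | h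
        · have : 0 ≤ z 0 * Real.exp (u * z 0 + ui * z i) := by positivity
          linarith [abs_nonneg (z 0 * Real.exp (0 * z 0 + ui * z i))]
        · have habs : |z 0 * Real.exp (u * z 0 + ui * z i)| ≤
              |z 0 * Real.exp (0 * z 0 + ui * z i)| := by
            rw [abs_mul, abs_mul, Real.abs_exp, Real.abs_exp]
            refine mul_le_mul_of_nonneg_left (Real.exp_le_exp.2 ?_) (abs_nonneg _)
            have : u * z 0 ≤ 0 * z 0 := by nlinarith
            linarith
          linarith [neg_abs_le (z 0 * Real.exp (u * z 0 + ui * z i))]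
      have hs1 : (∫ z in (S n)ᶜ, |z 0 * Real.exp (0 * z 0 + ui * z i)| ∂ν) ≤ C :=
        setIntegral_le_integral hCint (Eventually.of_forall fun z => abs_nonneg _)
      have hs2 : (∫ z in (S n)ᶜ, -(|z 0 * Real.exp (0 * z 0 + ui * z i)|) ∂ν) ≤
          ∫ z in (S n)ᶜ, z 0 * Real.exp (u * z 0 + ui * z i) ∂ν :=
        setIntegral_mono hCint.neg.integrableOn hIu.integrableOn fun z => hptw z
      rw [integral_neg] at hs2
      linarith
    linarith [hsplit]
  -- choose u large
  have htend : Tendsto (fun u : ℝ => ε * Real.exp (u * ((n : ℝ) + 1)⁻¹) * m - C)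
      atTop atTop := by
    have h1 : Tendsto (fun u : ℝ => u * ((n : ℝ) + 1)⁻¹) atTop atTop :=
      Tendsto.atTop_mul_const (by positivity) tendsto_id
    have h2 : Tendsto (fun u : ℝ => Real.exp (u * ((n : ℝ) + 1)⁻¹)) atTop atTop :=
      Real.tendsto_exp_atTop.comp h1
    have h3 := (h2.const_mul_atTop hεpos).atTop_mul_const hmpos
    have h4 := tendsto_atTop_add_const_right atTop (-C) h3
    exact h4.congr fun u => by ring
  obtain ⟨u, hu1, hu2⟩ := ((htend.eventually_ge_atTop M).and (eventually_ge_atTop (0 : ℝ))).exists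
  exact ⟨u, le_trans hu1 (hkey u hu2)⟩

/-- If z⁰e^{u⁰z⁰+uⁱzⁱ} is ν-integrable for all u⁰,uⁱ and ν charges both
{z⁰>0} and {z⁰<0}, then φ(u⁰) = ∫ z⁰ e^{u⁰z⁰+uⁱzⁱ} dν is strictly increasing and
surjective onto ℝ, and admits a continuous (two-sided) inverse on ℝ. -/
theorem stmt2 (I : ℕ) (ν : Measure (Fin (I + 1) → ℝ)) [SigmaFinite ν] (i : Fin (I + 1))
    (h0 : ν {0} = 0)
    (hInt : ∀ u0 ui : ℝ, Integrable (fun z => z 0 * Real.exp (u0 * z 0 + ui * z i)) ν)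
    (hpos : 0 < ν {z | 0 < z 0}) (hneg : 0 < ν {z | z 0 < 0})
    (ui : ℝ) :
    StrictMono (fun u0 : ℝ => ∫ z, z 0 * Real.exp (u0 * z 0 + ui * z i) ∂ν) ∧
    Function.Surjective (fun u0 : ℝ => ∫ z, z 0 * Real.exp (u0 * z 0 + ui * z i) ∂ν) ∧
    ∃ f : ℝ → ℝ, Continuous f ∧
      Function.LeftInverse f (fun u0 : ℝ => ∫ z, z 0 * Real.exp (u0 * z 0 + ui * z i) ∂ν) ∧
      Function.RightInverse f (fun u0 : ℝ => ∫ z, z 0 * Real.exp (u0 * z 0 + ui * z i) ∂ν) := by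
  set φ : ℝ → ℝ := fun u0 => ∫ z, z 0 * Real.exp (u0 * z 0 + ui * z i) ∂ν with hφ
  -- strict monotonicity
  have hmono : StrictMono φ := by
    intro a b hab
    have hdiff : φ b - φ a = ∫ z, (z 0 * Real.exp (b * z 0 + ui * z i) -
        z 0 * Real.exp (a * z 0 + ui * z i)) ∂ν := (integral_sub (hInt b ui) (hInt a ui)).symm
    have hnonneg : ∀ z : Fin (I + 1) → ℝ,
        0 ≤ z 0 * Real.exp (b * z 0 + ui * z i) - z 0 * Real.exp (a * z 0 + ui * z i) := by
      intro z
      rcases le_or_gt 0 (z 0) with h | h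
      · have : Real.exp (a * z 0 + ui * z i) ≤ Real.exp (b * z 0 + ui * z i) := by
          refine Real.exp_le_exp.2 (by nlinarith)
        nlinarith
      · have : Real.exp (b * z 0 + ui * z i) ≤ Real.exp (a * z 0 + ui * z i) := by
          refine Real.exp_le_exp.2 (by nlinarith)
        nlinarith
    have hposint : 0 < ∫ z, (z 0 * Real.exp (b * z 0 + ui * z i) -
        z 0 * Real.exp (a * z 0 + ui * z i)) ∂ν := by
      rw [integral_pos_iff_support_of_nonneg hnonneg ((hInt b ui).sub (hInt a ui))]
      refine lt_of_lt_of_le hpos (measure_mono ?_)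
      intro z hz
      have hz0 : (0 : ℝ) < z 0 := hz
      have : Real.exp (a * z 0 + ui * z i) < Real.exp (b * z 0 + ui * z i) := by
        refine Real.exp_lt_exp.2 (by nlinarith)
      have : 0 < z 0 * Real.exp (b * z 0 + ui * z i) - z 0 * Real.exp (a * z 0 + ui * z i) := by
        nlinarith
      exact ne_of_gt this
    have : 0 < φ b - φ a := hdiff ▸ hposint
    linarith
  -- continuity
  have hcont : Continuous φ := by
    rw [continuous_iff_continuousAt]
    intro u0
    refine continuousAt_of_dominated (bound := fun z =>
        |z 0 * Real.exp ((u0 - 1) * z 0 + ui * z i)| +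
        |z 0 * Real.exp ((u0 + 1) * z 0 + ui * z i)|) ?_ ?_ ?_ ?_
    · exact Eventually.of_forall fun u => (hInt u ui).1
    · filter_upwards [Metric.ball_mem_nhds u0 one_pos] with u hu
      refine Eventually.of_forall fun z => ?_
      rw [Real.norm_eq_abs, abs_mul, abs_mul, abs_mul, Real.abs_exp, Real.abs_exp,
        Real.abs_exp, ← mul_add]
      refine mul_le_mul_of_nonneg_left ?_ (abs_nonneg _)
      have hdist : |u - u0| < 1 := by
        rw [Metric.mem_ball, Real.dist_eq] at hu; exact hu
      rcases le_or_gt 0 (z 0) with h | h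
      · have : u * z 0 ≤ (u0 + 1) * z 0 := by nlinarith [abs_lt.1 hdist]
        have := Real.exp_le_exp.2 (show u * z 0 + ui * z i ≤ (u0 + 1) * z 0 + ui * z i by linarith)
        linarith [Real.exp_pos ((u0 - 1) * z 0 + ui * z i)]
      · have : u * z 0 ≤ (u0 - 1) * z 0 := by nlinarith [abs_lt.1 hdist]
        have := Real.exp_le_exp.2 (show u * z 0 + ui * z i ≤ (u0 - 1) * z 0 + ui * z i by linarith)
        linarith [Real.exp_pos ((u0 + 1) * z 0 + ui * z i)]
    · exact (hInt (u0 - 1) ui).abs.add (hInt (u0 + 1) ui).abs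
    · refine Eventually.of_forall fun z => ?_
      have : Continuous fun u : ℝ => z 0 * Real.exp (u * z 0 + ui * z i) := by
        continuity
      exact this.continuousAt
  -- unbounded above
  have htop : Tendsto φ atTop atTop :=
    tendsto_atTop_atTop_of_monotone hmono.monotone fun M => aux_unbdd I ν i hInt hpos ui M
  -- unbounded below via negation
  have hbot : Tendsto φ atBot atBot := by
    refine tendsto_atBot_atBot_of_monotone hmono.monotone fun M => ?_
    -- mapped measure
    set e : (Fin (I + 1) → ℝ) ≃ᵐ (Fin (I + 1) → ℝ) := MeasurableEquiv.neg _ with he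
    have hecoe : ∀ z : Fin (I + 1) → ℝ, e z = -z := fun z => rfl
    set ν' : Measure (Fin (I + 1) → ℝ) := ν.map e with hν'
    haveI : SigmaFinite ν' := e.sigmaFinite_map
    have hInt' : ∀ u0 v : ℝ, Integrable (fun z => z 0 * Real.exp (u0 * z 0 + v * z i)) ν' := by
      intro u0 v
      rw [hν', integrable_map_equiv]
      have : ((fun z : Fin (I + 1) → ℝ => z 0 * Real.exp (u0 * z 0 + v * z i)) ∘ e) =
          fun z => -(z 0 * Real.exp ((-u0) * z 0 + (-v) * z i)) := by
        funext z
        simp only [Function.comp_apply, hecoe, Pi.neg_apply]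
        ring_nf
      rw [this]
      exact (hInt (-u0) (-v)).neg
    have hpos' : 0 < ν' {z | 0 < z 0} := by
      rw [hν', MeasurableEquiv.map_apply]
      have : e ⁻¹' {z | 0 < z 0} = {z | z 0 < 0} := by
        ext z; simp [hecoe, Pi.neg_apply, neg_pos]
      rw [this]; exact hneg
    obtain ⟨u0, hu0⟩ := aux_unbdd I ν' i hInt' hpos' (-ui) (-M)
    refine ⟨-u0, ?_⟩
    have heq : (∫ z, z 0 * Real.exp (u0 * z 0 + (-ui) * z i) ∂ν') = -φ (-u0) := by
      rw [hν', integral_map_equiv]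
      rw [hφ, ← integral_neg]
      congr 1
      funext z
      simp only [hecoe, Pi.neg_apply]
      ring_nf
    rw [heq] at hu0
    linarith
  have hsurj : Function.Surjective φ := hcont.surjective htop hbot
  refine ⟨hmono, hsurj, ?_⟩
  set eiso : ℝ ≃o ℝ := StrictMono.orderIsoOfSurjective φ hmono hsurj with heiso
  refine ⟨eiso.symm, ?_, ?_, ?_⟩
  · exact eiso.symm.continuous
  · intro x
    have : eiso x = φ x := rfl
    rw [show φ x = eiso x from rfl]
    exact eiso.symm_apply_apply x
  · intro x
    rw [show φ (eiso.symm x) = eiso (eiso.symm x) from rfl]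
    exact eiso.apply_symm_apply x
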